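/- arXiv:1807.05420 — 4 statements merged into one kernel-verified Lean document; each statement's English description precedes it below -/
import Mathlib

section
/- Let η ∈ (0,1) and set θ = 1 − η. If ∫_{ℝ^d} (1+|ξ|²)^{−η} μ(dξ) < ∞, then there exists a constant C > 0 depending only on θ such that for all t > 0 and h > 0: sup_{η' ∈ ℝ^d} ∫_{ℝ^d} ( e^{−(t+h)|ξ+η'|²/2} − e^{−t|ξ+η'|²/2} )² μ(dξ) ≤ C h^θ t^{−θ} k(t/2). -/
open MeasureTheory Real ENNReal

/-- `k(t) = ∫_{ℝ^d} e^{-t |ξ|²} μ(dξ)`. -/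
noncomputable def heatK {d : ℕ} (μ : Measure (EuclideanSpace ℝ (Fin d))) (t : ℝ) : ℝ≥0∞ :=
  ∫⁻ ξ, ENNReal.ofReal (Real.exp (-t * ‖ξ‖ ^ 2)) ∂μ

/-- `μ` is the spectral measure of a nonnegative locally integrable function `f : ℝ^d → [0,∞)`,
i.e. `∫ f(x) φ(x) dx = ∫ Fφ(ξ) μ(dξ)` for every Schwartz function `φ : ℝ^d → ℂ`, where
`Fφ(ξ) = ∫ e^{-i ξ·x} φ(x) dx` is the Fourier transform. -/
def IsSpectralMeasureOfNonnegFn {d : ℕ} (μ : Measure (EuclideanSpace ℝ (Fin d))) : Prop :=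
  ∃ f : EuclideanSpace ℝ (Fin d) → ℝ,
    (∀ x, 0 ≤ f x) ∧ LocallyIntegrable f volume ∧
    ∀ φ : SchwartzMap (EuclideanSpace ℝ (Fin d)) ℂ,
      ∫ x, (f x : ℂ) * φ x =
        ∫ ξ, (∫ x, Complex.exp (-(Complex.I * ((@inner ℝ _ _ ξ x : ℝ) : ℂ))) * φ x) ∂μ

open Real
open scoped RealInnerProductSpace SchwartzMap

noncomputable section GaussAux

variable {d : ℕ}

local notation:max "𝔼" => EuclideanSpace ℝ (Fin d)

/-- modulated gaussian -/
def gaussFn (b : ℝ) (w : 𝔼) : 𝔼 → ℂ := fun x =>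
  Complex.exp (((-b * ‖x‖ ^ 2 : ℝ) : ℂ) + Complex.I * ((⟪w, x⟫ : ℝ) : ℂ))

def gM (b : ℝ) : 𝔼 →L[ℝ] (𝔼 →L[ℝ] ℂ) :=
  (-(2 * b)) • ((ContinuousLinearMap.compL ℝ 𝔼 ℝ ℂ Complex.ofRealCLM).comp
    (innerSL ℝ))

def gC (w : 𝔼) : 𝔼 →L[ℝ] ℂ := Complex.I • (Complex.ofRealCLM.comp (innerSL ℝ w))

lemma gauss_contDiff (b : ℝ) (w : 𝔼) : ContDiff ℝ ((⊤ : ℕ∞) : WithTop ℕ∞) (gaussFn b w) := by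
  apply ContDiff.cexp
  apply ContDiff.add
  · exact Complex.ofRealCLM.contDiff.comp (contDiff_const.mul (contDiff_norm_sq ℝ))
  · exact ContDiff.mul contDiff_const (Complex.ofRealCLM.contDiff.comp ((innerSL ℝ w).contDiff))

lemma gauss_hasFDerivAt (b : ℝ) (w : 𝔼) (x : 𝔼) :
    HasFDerivAt (gaussFn b w) (gaussFn b w x • (gM b x + gC w)) x := by
  have h1 : HasFDerivAt (fun x : 𝔼 => (‖x‖ ^ 2 : ℝ)) (2 • (innerSL ℝ x)) x :=
    (hasStrictFDerivAt_norm_sq x).hasFDerivAt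
  have h2 : HasFDerivAt (fun x : 𝔼 => ((-b * ‖x‖ ^ 2 : ℝ) : ℂ))
      (Complex.ofRealCLM.comp ((-b) • (2 • (innerSL ℝ x)))) x :=
    Complex.ofRealCLM.hasFDerivAt.comp x (h1.const_mul (-b))
  have h3 : HasFDerivAt (fun x : 𝔼 => ((⟪w, x⟫ : ℝ) : ℂ))
      (Complex.ofRealCLM.comp (innerSL ℝ w)) x :=
    Complex.ofRealCLM.hasFDerivAt.comp x (innerSL ℝ w).hasFDerivAt
  have h4 := (h2.add (h3.const_mul Complex.I)).cexp
  have heq : gM b x + gC w =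
      Complex.ofRealCLM.comp ((-b) • (2 • (innerSL ℝ x))) +
        Complex.I • (Complex.ofRealCLM.comp (innerSL ℝ w)) := by
    ext v
    simp [gM, gC, ContinuousLinearMap.compL]
    ring
  rw [gaussFn, heq]
  exact h4

lemma gauss_fderiv (b : ℝ) (w : 𝔼) :
    fderiv ℝ (gaussFn b w) = fun x => gaussFn b w x • (gM b x + gC w) :=
  funext fun x => (gauss_hasFDerivAt b w x).fderiv

lemma gauss_norm (b : ℝ) (w : 𝔼) (x : 𝔼) :
    ‖gaussFn b w x‖ = rexp (-b * ‖x‖ ^ 2) := by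
  have hre : (((-b * ‖x‖ ^ 2 : ℝ) : ℂ) + Complex.I * ((⟪w, x⟫ : ℝ) : ℂ)).re
      = -b * ‖x‖ ^ 2 := by simp [← Complex.ofReal_pow]
  rw [gaussFn, Complex.norm_exp, hre]

lemma gaussFn_def (b : ℝ) (w : 𝔼) (x : 𝔼) : gaussFn b w x =
    Complex.exp (((-b * ‖x‖ ^ 2 : ℝ) : ℂ) + Complex.I * ((⟪w, x⟫ : ℝ) : ℂ)) := rfl

/-- polynomial times gaussian is bounded -/
lemma poly_gauss_bound {b : ℝ} (hb : 0 < b) (K : ℕ) {r : ℝ} (hr : 0 ≤ r) :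
    (1 + r) ^ K * rexp (-b * r ^ 2) ≤ rexp ((K : ℝ) ^ 2 / (4 * b)) := by
  have h1 : (1 + r) ^ K ≤ rexp ((K : ℝ) * r) := by
    calc (1 + r) ^ K ≤ (rexp r) ^ K := by
          apply pow_le_pow_left₀ (by linarith)
          linarith [Real.add_one_le_exp r]
        _ = rexp ((K : ℝ) * r) := by rw [← Real.exp_nat_mul]
  calc (1 + r) ^ K * rexp (-b * r ^ 2) ≤ rexp ((K : ℝ) * r) * rexp (-b * r ^ 2) := by
        apply mul_le_mul_of_nonneg_right h1 (Real.exp_nonneg _)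
    _ = rexp ((K : ℝ) * r - b * r ^ 2) := by rw [← Real.exp_add]; ring_nf
    _ ≤ rexp ((K : ℝ) ^ 2 / (4 * b)) := by
        apply Real.exp_le_exp.2
        rw [le_div_iff₀ (by linarith)]
        nlinarith [sq_nonneg (2 * b * r - (K : ℝ))]
lemma gL_iFD_bound (b : ℝ) (w : 𝔼) (j : ℕ) (x : 𝔼) :
    ‖iteratedFDeriv ℝ j (fun x : 𝔼 => gM b x + gC w) x‖ ≤
      (‖gM (d := d) b‖ + ‖gC w‖) * (1 + ‖x‖) := by
  have hx : (0:ℝ) ≤ ‖x‖ := norm_nonneg x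
  have hM : (0:ℝ) ≤ ‖gM (d := d) b‖ := (gM b).opNorm_nonneg
  have hC : (0:ℝ) ≤ ‖gC w‖ := (gC w).opNorm_nonneg
  match j with
  | 0 =>
    rw [norm_iteratedFDeriv_zero]
    calc ‖gM b x + gC w‖ ≤ ‖gM b x‖ + ‖gC w‖ := norm_add_le _ _
      _ ≤ ‖gM b‖ * ‖x‖ + ‖gC w‖ := by
          gcongr
          exact (gM b).le_opNorm x
      _ ≤ (‖gM b‖ + ‖gC w‖) * (1 + ‖x‖) := by nlinarith
  | (j + 1) =>
    have hfd : fderiv ℝ (fun x : 𝔼 => gM b x + gC w) = fun _ => gM b :=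
      funext fun y => ((gM b).hasFDerivAt.add_const (gC w)).fderiv
    rw [← norm_iteratedFDeriv_fderiv, hfd]
    match j with
    | 0 =>
      rw [norm_iteratedFDeriv_zero]
      nlinarith
    | (j + 1) =>
      rw [iteratedFDeriv_succ_const]
      simp
      positivity

lemma gauss_iFD_decay (b : ℝ) (w : 𝔼) (n : ℕ) :
    ∃ C : ℝ, 0 ≤ C ∧ ∃ k : ℕ, ∀ i ≤ n, ∀ x : 𝔼,
      ‖iteratedFDeriv ℝ i (gaussFn b w) x‖ ≤ C * (1 + ‖x‖) ^ k * rexp (-b * ‖x‖ ^ 2) := by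
  induction n with
  | zero =>
    refine ⟨1, zero_le_one, 0, ?_⟩
    intro i hi x
    interval_cases i
    rw [norm_iteratedFDeriv_zero, gauss_norm]
    simp
  | succ n IH =>
    obtain ⟨C, hC0, k, hC⟩ := IH
    set CL : ℝ := ‖gM (d := d) b‖ + ‖gC w‖ with hCL
    have hCL0 : 0 ≤ CL := by positivity
    set C' : ℝ := max C (2 ^ n * C * CL) with hC'
    refine ⟨C', le_max_of_le_left hC0, k + 1, ?_⟩
    have hmono : ∀ x : 𝔼, (1:ℝ) ≤ 1 + ‖x‖ := fun x => by
      have := norm_nonneg x; linarith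
    intro i hi x
    have hx1 : (1:ℝ) ≤ 1 + ‖x‖ := hmono x
    rcases Nat.lt_or_ge i (n + 1) with h | h
    · -- i ≤ n : use IH
      calc ‖iteratedFDeriv ℝ i (gaussFn b w) x‖
          ≤ C * (1 + ‖x‖) ^ k * rexp (-b * ‖x‖ ^ 2) := hC i (Nat.lt_succ_iff.mp h) x
        _ ≤ C' * (1 + ‖x‖) ^ (k + 1) * rexp (-b * ‖x‖ ^ 2) := by
            gcongr
            · exact le_max_left _ _
            · exact Nat.le_succ k
    · have hi' : i = n + 1 := le_antisymm hi h
      subst hi'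
      have hsmul : ‖iteratedFDeriv ℝ n (fun y : 𝔼 => gaussFn b w y • (gM b y + gC w)) x‖ ≤
          ∑ j ∈ Finset.range (n + 1), (n.choose j : ℝ) *
            ‖iteratedFDeriv ℝ j (gaussFn b w) x‖ *
            ‖iteratedFDeriv ℝ (n - j) (fun y : 𝔼 => gM b y + gC w) x‖ :=
        norm_iteratedFDeriv_smul_le ((gauss_contDiff b w).of_le (by exact_mod_cast le_top))
          (((gM b).contDiff.add contDiff_const).of_le (le_refl _)) x
          (le_refl (n : WithTop ℕ∞))
      have key : ‖iteratedFDeriv ℝ (n + 1) (gaussFn b w) x‖ ≤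
          2 ^ n * C * CL * (1 + ‖x‖) ^ (k + 1) * rexp (-b * ‖x‖ ^ 2) := by
        rw [← norm_iteratedFDeriv_fderiv, gauss_fderiv]
        refine hsmul.trans ?_
        have hterm : ∀ j ∈ Finset.range (n + 1), (n.choose j : ℝ) *
            ‖iteratedFDeriv ℝ j (gaussFn b w) x‖ *
            ‖iteratedFDeriv ℝ (n - j) (fun y : 𝔼 => gM b y + gC w) x‖ ≤
            (n.choose j : ℝ) * (C * (1 + ‖x‖) ^ k * rexp (-b * ‖x‖ ^ 2)) *
              (CL * (1 + ‖x‖)) := by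
          intro j hj
          have hj' : j ≤ n := Nat.lt_succ_iff.mp (Finset.mem_range.mp hj)
          gcongr
          · exact hC j hj' x
          · exact gL_iFD_bound b w _ x
        refine (Finset.sum_le_sum hterm).trans ?_
        rw [← Finset.sum_mul, ← Finset.sum_mul]
        have hbinom : ∑ j ∈ Finset.range (n + 1), (n.choose j : ℝ) = 2 ^ n := by
          rw [← Nat.cast_sum, Nat.sum_range_choose]
          push_cast; ring
        rw [hbinom]
        apply le_of_eq
        ring
      refine key.trans ?_
      gcongr
      exact le_max_right _ _

/-- the gaussian as a Schwartz map -/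
def gaussSchwartz (b : ℝ) (hb : 0 < b) (w : 𝔼) : 𝓢(𝔼, ℂ) where
  toFun := gaussFn b w
  smooth' := gauss_contDiff b w
  decay' := by
    intro k n
    obtain ⟨C, hC0, m, hC⟩ := gauss_iFD_decay b w n
    refine ⟨C * rexp (((k + m : ℕ) : ℝ) ^ 2 / (4 * b)), fun x => ?_⟩
    have hx : (0:ℝ) ≤ ‖x‖ := norm_nonneg x
    calc ‖x‖ ^ k * ‖iteratedFDeriv ℝ n (gaussFn b w) x‖
        ≤ ‖x‖ ^ k * (C * (1 + ‖x‖) ^ m * rexp (-b * ‖x‖ ^ 2)) := by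
          exact mul_le_mul_of_nonneg_left (hC n le_rfl x) (pow_nonneg hx k)
      _ ≤ (1 + ‖x‖) ^ k * (C * (1 + ‖x‖) ^ m * rexp (-b * ‖x‖ ^ 2)) := by
          have h2 : ‖x‖ ^ k ≤ (1 + ‖x‖) ^ k :=
            pow_le_pow_left₀ hx (by linarith) k
          have : (0:ℝ) ≤ C * (1 + ‖x‖) ^ m * rexp (-b * ‖x‖ ^ 2) := by positivity
          exact mul_le_mul_of_nonneg_right h2 this
      _ = C * ((1 + ‖x‖) ^ (k + m) * rexp (-b * ‖x‖ ^ 2)) := by rw [pow_add]; ring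
      _ ≤ C * rexp (((k + m : ℕ) : ℝ) ^ 2 / (4 * b)) := by
          exact mul_le_mul_of_nonneg_left (poly_gauss_bound hb (k + m) (by linarith)) hC0

lemma gaussSchwartz_apply (b : ℝ) (hb : 0 < b) (w x : 𝔼) :
    gaussSchwartz b hb w x = gaussFn b w x := rfl

/-- Fourier transform of the modulated gaussian. -/
lemma gauss_fourier (b : ℝ) (hb : 0 < b) (w ξ : 𝔼) :
    ∫ x : 𝔼, Complex.exp (-(Complex.I * ((⟪ξ, x⟫ : ℝ) : ℂ))) * gaussFn b w x
      = (((π / b) ^ ((d : ℝ) / 2) * rexp (-(‖w - ξ‖ ^ 2) / (4 * b)) : ℝ) : ℂ) := by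
  have h := GaussianFourier.integral_cexp_neg_mul_sq_norm_add
    (V := EuclideanSpace ℝ (Fin d)) (b := (b : ℂ)) (by simpa using hb) Complex.I (w - ξ)
  calc ∫ x : 𝔼, Complex.exp (-(Complex.I * ((⟪ξ, x⟫ : ℝ) : ℂ))) * gaussFn b w x
      = ∫ x : 𝔼, Complex.exp (-(b:ℂ) * (‖x‖:ℂ) ^ 2 + Complex.I * ((⟪w - ξ, x⟫ : ℝ) : ℂ)) := by
        congr 1
        funext x
        rw [gaussFn_def, ← Complex.exp_add]
        congr 1
        push_cast [inner_sub_left]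
        ring
    _ = ((π:ℂ) / b) ^ ((Module.finrank ℝ (EuclideanSpace ℝ (Fin d)) : ℂ) / 2) *
          Complex.exp (Complex.I ^ 2 * ((‖w - ξ‖:ℂ)) ^ 2 / (4 * (b:ℂ))) := h
    _ = _ := by
        rw [Complex.I_sq, finrank_euclideanSpace_fin]
        push_cast
        rw [Complex.ofReal_cpow (by positivity)]
        push_cast
        norm_num

/-- domination of shifted gaussian by the weight -/
lemma exp_shift_le {η s : ℝ} (hη1 : η ≤ 1) (hs : 0 < s) (w ξ : 𝔼) :
    rexp (-s * ‖ξ - w‖ ^ 2) ≤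
      ((1 + 2 * ‖w‖ ^ 2) * (1 + 2 / s)) * (1 + ‖ξ‖ ^ 2) ^ (-η) := by
  set u : ℝ := ‖ξ - w‖ ^ 2 with hu
  set v : ℝ := ‖ξ‖ ^ 2 with hv
  have hu0 : 0 ≤ u := sq_nonneg _
  have hv0 : 0 ≤ v := sq_nonneg _
  have h1 : (1 + v) ^ η ≤ 1 + v := by
    calc (1 + v) ^ η ≤ (1 + v) ^ (1:ℝ) :=
          Real.rpow_le_rpow_of_exponent_le (by linarith) hη1
      _ = 1 + v := Real.rpow_one _
  have h2 : v ≤ 2 * u + 2 * ‖w‖ ^ 2 := by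
    have hle : ‖(ξ : 𝔼)‖ ≤ ‖ξ - w‖ + ‖w‖ := by
      have := norm_add_le (ξ - w) w
      simpa using this
    have h' : ‖(ξ : 𝔼)‖ ^ 2 ≤ (‖ξ - w‖ + ‖w‖) ^ 2 :=
      pow_le_pow_left₀ (norm_nonneg _) hle 2
    nlinarith [sq_nonneg (‖ξ - w‖ - ‖w‖)]
  have h3 : 1 + 2 * u ≤ (1 + 2 / s) * rexp (s * u) := by
    have hexp : 1 + s * u ≤ rexp (s * u) := by
      linarith [Real.add_one_le_exp (s * u)]
    have hpos : (0:ℝ) < 1 + 2 / s := by positivity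
    have hc : 2 / s * (s * u) = 2 * u := by field_simp
    calc 1 + 2 * u ≤ (1 + 2 / s) * (1 + s * u) := by
          nlinarith [mul_nonneg hs.le hu0, div_nonneg (by norm_num : (0:ℝ) ≤ 2) hs.le]
      _ ≤ (1 + 2 / s) * rexp (s * u) := mul_le_mul_of_nonneg_left hexp (le_of_lt hpos)
  have key : (1 + v) ^ η * rexp (-s * u) ≤ (1 + 2 * ‖w‖ ^ 2) * (1 + 2 / s) := by
    have hA : (1 + v) ^ η * rexp (-s * u) ≤ (1 + v) * rexp (-s * u) :=
      mul_le_mul_of_nonneg_right h1 (Real.exp_nonneg _)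
    have hB : (1 + v) ≤ (1 + 2 * ‖w‖ ^ 2) * (1 + 2 * u) := by nlinarith
    have hC : (1 + 2 * u) * rexp (-s * u) ≤ 1 + 2 / s := by
      have hh := mul_le_mul_of_nonneg_right h3 (Real.exp_nonneg (-s * u))
      rw [mul_assoc, ← Real.exp_add] at hh
      have hz : s * u + -s * u = 0 := by ring
      rw [hz, Real.exp_zero, mul_one] at hh
      exact hh
    calc (1 + v) ^ η * rexp (-s * u) ≤ (1 + v) * rexp (-s * u) := hA
      _ ≤ (1 + 2 * ‖w‖ ^ 2) * ((1 + 2 * u) * rexp (-s * u)) := by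
          rw [← mul_assoc]
          exact mul_le_mul_of_nonneg_right (by nlinarith) (Real.exp_nonneg _)
      _ ≤ (1 + 2 * ‖w‖ ^ 2) * (1 + 2 / s) := by
          have hw : (0:ℝ) ≤ 1 + 2 * ‖w‖ ^ 2 := by positivity
          exact mul_le_mul_of_nonneg_left hC hw
  have hvpow : (0:ℝ) < (1 + v) ^ η := Real.rpow_pos_of_pos (by linarith) η
  rw [Real.rpow_neg (by linarith : (0:ℝ) ≤ 1 + v), ← div_eq_mul_inv,
    le_div_iff₀ hvpow, mul_comm]
  exact key

lemma exp_shift_lintegral_lt_top {η s : ℝ} (hη1 : η ≤ 1) (hs : 0 < s)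
    (μ : Measure 𝔼)
    (hμ : ∫⁻ ξ, ENNReal.ofReal ((1 + ‖ξ‖ ^ 2) ^ (-η)) ∂μ < ⊤) (w : 𝔼) :
    ∫⁻ ξ, ENNReal.ofReal (rexp (-s * ‖ξ - w‖ ^ 2)) ∂μ < ⊤ := by
  set Cw : ℝ := (1 + 2 * ‖w‖ ^ 2) * (1 + 2 / s) with hCw
  have hCw0 : 0 ≤ Cw := by positivity
  calc ∫⁻ ξ, ENNReal.ofReal (rexp (-s * ‖ξ - w‖ ^ 2)) ∂μ
      ≤ ∫⁻ ξ, ENNReal.ofReal Cw * ENNReal.ofReal ((1 + ‖ξ‖ ^ 2) ^ (-η)) ∂μ := by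
        apply lintegral_mono
        intro ξ
        dsimp only
        rw [← ENNReal.ofReal_mul hCw0]
        exact ENNReal.ofReal_le_ofReal (exp_shift_le hη1 hs w ξ)
    _ = ENNReal.ofReal Cw * ∫⁻ ξ, ENNReal.ofReal ((1 + ‖ξ‖ ^ 2) ^ (-η)) ∂μ :=
        lintegral_const_mul' _ _ ENNReal.ofReal_ne_top
    _ < ⊤ := ENNReal.mul_lt_top ENNReal.ofReal_lt_top hμ

lemma gauss_cont (s : ℝ) (w : 𝔼) :
    Continuous (fun ξ : 𝔼 => rexp (-s * ‖ξ - w‖ ^ 2)) := by fun_prop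

/-- Key lemma: shift-invariance upper bound for spectral measures of nonneg functions. -/
lemma shift_bound (μ : Measure 𝔼) (hspec : IsSpectralMeasureOfNonnegFn μ)
    {η : ℝ} (hη1 : η ≤ 1)
    (hμ : ∫⁻ ξ, ENNReal.ofReal ((1 + ‖ξ‖ ^ 2) ^ (-η)) ∂μ < ⊤)
    {s : ℝ} (hs : 0 < s) (w : 𝔼) :
    ∫⁻ ξ, ENNReal.ofReal (rexp (-s * ‖ξ - w‖ ^ 2)) ∂μ ≤
      ∫⁻ ξ, ENNReal.ofReal (rexp (-s * ‖ξ‖ ^ 2)) ∂μ := by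
  obtain ⟨f, hf0, hfloc, hfid⟩ := hspec
  set b : ℝ := (4 * s)⁻¹ with hbdef
  have hb : 0 < b := by positivity
  have harg : ∀ u : ℝ, -u / (4 * b) = -s * u := by
    intro u; rw [hbdef]; field_simp
  set K : ℝ := (π / b) ^ ((d : ℝ) / 2) with hK
  have hK0 : 0 < K := Real.rpow_pos_of_pos (by positivity) _
  set gw : 𝔼 → ℝ := fun ξ => rexp (-s * ‖ξ - w‖ ^ 2) with hgw
  set g0 : 𝔼 → ℝ := fun ξ => rexp (-s * ‖ξ‖ ^ 2) with hg0
  -- rewrite μ-side of the spectral identity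
  have hfour : ∀ (w' : 𝔼) (ξ : 𝔼),
      (∫ x, Complex.exp (-(Complex.I * ((⟪ξ, x⟫ : ℝ) : ℂ))) * (gaussSchwartz b hb w') x)
        = ((K * rexp (-s * ‖ξ - w'‖ ^ 2) : ℝ) : ℂ) := by
    intro w' ξ
    have h1 : (∫ x, Complex.exp (-(Complex.I * ((⟪ξ, x⟫ : ℝ) : ℂ))) * (gaussSchwartz b hb w') x)
        = ∫ x : 𝔼, Complex.exp (-(Complex.I * ((⟪ξ, x⟫ : ℝ) : ℂ))) * gaussFn b w' x := rfl
    rw [h1, gauss_fourier b hb w' ξ]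
    rw [harg (‖w' - ξ‖ ^ 2), norm_sub_rev]
  -- identity for shift w
  have hw := hfid (gaussSchwartz b hb w)
  have h0 := hfid (gaussSchwartz b hb 0)
  rw [show (∫ ξ, (∫ x, Complex.exp (-(Complex.I * ((⟪ξ, x⟫ : ℝ) : ℂ)))
      * (gaussSchwartz b hb w) x) ∂μ)
      = ∫ ξ, ((K * gw ξ : ℝ) : ℂ) ∂μ from by
    congr 1; funext ξ; exact hfour w ξ] at hw
  rw [show (∫ ξ, (∫ x, Complex.exp (-(Complex.I * ((⟪ξ, x⟫ : ℝ) : ℂ)))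
      * (gaussSchwartz b hb 0) x) ∂μ)
      = ∫ ξ, ((K * g0 ξ : ℝ) : ℂ) ∂μ from by
    congr 1; funext ξ; rw [hfour 0 ξ]; simp [hg0]] at h0
  -- the complex μ-integrals are real
  have hwμ : (∫ ξ, ((K * gw ξ : ℝ) : ℂ) ∂μ) = ((K * ∫ ξ, gw ξ ∂μ : ℝ) : ℂ) := by
    have h1 : (∫ ξ, ((K * gw ξ : ℝ) : ℂ) ∂μ) = ((∫ ξ, K * gw ξ ∂μ : ℝ) : ℂ) := integral_ofReal
    rw [h1, integral_const_mul]
  have h0μ : (∫ ξ, ((K * g0 ξ : ℝ) : ℂ) ∂μ) = ((K * ∫ ξ, g0 ξ ∂μ : ℝ) : ℂ) := by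
    have h1 : (∫ ξ, ((K * g0 ξ : ℝ) : ℂ) ∂μ) = ((∫ ξ, K * g0 ξ ∂μ : ℝ) : ℂ) := integral_ofReal
    rw [h1, integral_const_mul]
  rw [hwμ] at hw
  rw [h0μ] at h0
  -- the x-integral with w' = 0 is real and dominates the one with w
  have hx0 : (∫ x, (f x : ℂ) * (gaussSchwartz b hb 0) x)
      = ((∫ x, f x * rexp (-b * ‖x‖ ^ 2) : ℝ) : ℂ) := by
    rw [show (fun x : 𝔼 => (f x : ℂ) * (gaussSchwartz b hb 0) x)
        = fun x : 𝔼 => ((f x * rexp (-b * ‖x‖ ^ 2) : ℝ) : ℂ) from by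
      funext x
      rw [gaussSchwartz_apply, gaussFn_def]
      simp [Complex.ofReal_exp, Complex.ofReal_mul]]
    exact integral_ofReal
  have hxw : ‖∫ x, (f x : ℂ) * (gaussSchwartz b hb w) x‖
      ≤ ∫ x, f x * rexp (-b * ‖x‖ ^ 2) := by
    refine (norm_integral_le_integral_norm _).trans ?_
    apply le_of_eq
    congr 1
    funext x
    rw [norm_mul, gaussSchwartz_apply, gauss_norm, Complex.norm_real,
      Real.norm_eq_abs, abs_of_nonneg (hf0 x)]
  -- combine
  have hreal : K * ∫ ξ, gw ξ ∂μ ≤ K * ∫ ξ, g0 ξ ∂μ := by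
    have e0 : ∫ x, f x * rexp (-b * ‖x‖ ^ 2) = K * ∫ ξ, g0 ξ ∂μ := by
      have h' : ((∫ x, f x * rexp (-b * ‖x‖ ^ 2) : ℝ) : ℂ) = ((K * ∫ ξ, g0 ξ ∂μ : ℝ) : ℂ) := by
        rw [← hx0, h0]
      exact_mod_cast h'
    have hgw0 : 0 ≤ ∫ ξ, gw ξ ∂μ := integral_nonneg fun ξ => Real.exp_nonneg _
    have habs : K * ∫ ξ, gw ξ ∂μ = ‖∫ x, (f x : ℂ) * (gaussSchwartz b hb w) x‖ := by
      rw [hw, Complex.norm_real, Real.norm_eq_abs, abs_of_nonneg (by positivity)]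
    rw [habs, ← e0]
    exact hxw
  have hint : ∫ ξ, gw ξ ∂μ ≤ ∫ ξ, g0 ξ ∂μ := le_of_mul_le_mul_left hreal hK0
  -- transfer to lintegrals
  have hmw : AEStronglyMeasurable gw μ := (gauss_cont s w).aestronglyMeasurable
  have hm0 : AEStronglyMeasurable g0 μ :=
    Continuous.aestronglyMeasurable (by fun_prop)
  have hlw : ∫ ξ, gw ξ ∂μ = (∫⁻ ξ, ENNReal.ofReal (gw ξ) ∂μ).toReal :=
    integral_eq_lintegral_of_nonneg_ae (Filter.Eventually.of_forall fun ξ => Real.exp_nonneg _) hmw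
  have hl0 : ∫ ξ, g0 ξ ∂μ = (∫⁻ ξ, ENNReal.ofReal (g0 ξ) ∂μ).toReal :=
    integral_eq_lintegral_of_nonneg_ae (Filter.Eventually.of_forall fun ξ => Real.exp_nonneg _) hm0
  have hfinw : ∫⁻ ξ, ENNReal.ofReal (gw ξ) ∂μ ≠ ⊤ :=
    (exp_shift_lintegral_lt_top hη1 hs μ hμ w).ne
  have hfin0 : ∫⁻ ξ, ENNReal.ofReal (g0 ξ) ∂μ ≠ ⊤ := by
    rw [hg0]
    have h' := (exp_shift_lintegral_lt_top hη1 hs μ hμ (0 : 𝔼)).ne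
    simpa [sub_zero] using h'
  apply (ENNReal.toReal_le_toReal hfinw hfin0).mp
  rw [← hlw, ← hl0]
  exact hint

end GaussAux

lemma time_increment_pointwise {θ t h a : ℝ} (hθ0 : 0 < θ) (hθ1 : θ ≤ 1)
    (ht : 0 < t) (hh : 0 < h) (ha : 0 ≤ a) :
    (rexp (-(t + h) * a / 2) - rexp (-t * a / 2)) ^ 2 ≤
      h ^ θ * t ^ (-θ) * rexp (-(t / 2) * a) := by
  rcases eq_or_lt_of_le ha with rfl | ha0
  · simp
    positivity
  set u : ℝ := h * a / 2 with hu
  set v : ℝ := t * a / 2 with hv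
  have hu0 : 0 < u := by positivity
  have hv0 : 0 < v := by positivity
  have hLHS : (rexp (-(t + h) * a / 2) - rexp (-t * a / 2)) ^ 2
      = rexp (-v) ^ 2 * (1 - rexp (-u)) ^ 2 := by
    have h1 : -(t + h) * a / 2 = -v + -u := by rw [hu, hv]; ring
    have h2 : -t * a / 2 = -v := by rw [hv]; ring
    rw [h1, h2, Real.exp_add]
    ring
  have hexp1 : rexp (-u) ≤ 1 := Real.exp_le_one_iff.mpr (by linarith)
  have hstep1 : (1 - rexp (-u)) ^ 2 ≤ u ^ θ := by
    have hmin : 1 - rexp (-u) ≤ min 1 u := by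
      apply le_min (by linarith [Real.exp_nonneg (-u)])
      linarith [Real.add_one_le_exp (-u)]
    have hge : (0:ℝ) ≤ 1 - rexp (-u) := by linarith
    have hsq : (1 - rexp (-u)) ^ 2 ≤ min 1 u := by
      calc (1 - rexp (-u)) ^ 2 ≤ (min 1 u) ^ 2 := by
            apply pow_le_pow_left₀ hge hmin
        _ = min 1 u * min 1 u := sq (min 1 u)
        _ ≤ 1 * min 1 u := by
            apply mul_le_mul_of_nonneg_right (min_le_left _ _) (le_min zero_le_one hu0.le)
        _ = min 1 u := one_mul _
    refine hsq.trans ?_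
    rcases le_total u 1 with hule | huge
    · rw [min_eq_right hule]
      calc u = u ^ (1:ℝ) := (Real.rpow_one u).symm
        _ ≤ u ^ θ := Real.rpow_le_rpow_of_exponent_ge hu0 hule hθ1
    · rw [min_eq_left huge]
      calc (1:ℝ) = 1 ^ θ := (Real.one_rpow θ).symm
        _ ≤ u ^ θ := Real.rpow_le_rpow zero_le_one huge hθ0.le
  have hsplit : u ^ θ = (h / t) ^ θ * v ^ θ := by
    rw [← Real.mul_rpow (by positivity) hv0.le]
    congr 1
    rw [hu, hv]
    field_simp
  have hstep3 : v ^ θ * rexp (-v) ≤ 1 := by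
    rcases le_total v 1 with hvle | hvge
    · have h1 : v ^ θ ≤ 1 := Real.rpow_le_one hv0.le hvle hθ0.le
      have h2 : rexp (-v) ≤ 1 := Real.exp_le_one_iff.mpr (by linarith)
      nlinarith [Real.exp_nonneg (-v), Real.rpow_nonneg hv0.le θ]
    · have h1 : v ^ θ ≤ v := by
        calc v ^ θ ≤ v ^ (1:ℝ) := Real.rpow_le_rpow_of_exponent_le hvge hθ1
          _ = v := Real.rpow_one v
      have h2 : v ≤ rexp v := by linarith [Real.add_one_le_exp v]
      calc v ^ θ * rexp (-v) ≤ rexp v * rexp (-v) := by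
            apply mul_le_mul_of_nonneg_right (h1.trans h2) (Real.exp_nonneg _)
        _ = 1 := by rw [← Real.exp_add]; simp
  calc (rexp (-(t + h) * a / 2) - rexp (-t * a / 2)) ^ 2
      = rexp (-v) ^ 2 * (1 - rexp (-u)) ^ 2 := hLHS
    _ ≤ rexp (-v) ^ 2 * u ^ θ := by
        apply mul_le_mul_of_nonneg_left hstep1 (by positivity)
    _ = (h / t) ^ θ * (v ^ θ * rexp (-v)) * rexp (-v) := by
        rw [hsplit, sq]
        ring
    _ ≤ (h / t) ^ θ * 1 * rexp (-v) := by
        apply mul_le_mul_of_nonneg_right _ (Real.exp_nonneg _)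
        apply mul_le_mul_of_nonneg_left hstep3 (by positivity)
    _ = h ^ θ * t ^ (-θ) * rexp (-(t / 2) * a) := by
        rw [mul_one, Real.div_rpow hh.le ht.le, Real.rpow_neg ht.le, div_eq_mul_inv]
        congr 2
        rw [hv]
        ring


/-- If `∫ (1+|ξ|²)^{-η} μ(dξ) < ∞` for some `η ∈ (0,1)` and `θ = 1 - η`, then there is a
constant `C > 0` depending only on `θ` such that for all `t > 0` and `h > 0`,
the supremum over shifts `η'` of `∫ (FG(t+h)(ξ+η') - FG(t)(ξ+η'))² μ(dξ)` is at most
`C h^θ t^{-θ} k(t/2)`. -/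
theorem sup_time_increment_bound (d : ℕ) (hd : 1 ≤ d)
    (μ : Measure (EuclideanSpace ℝ (Fin d))) (hspec : IsSpectralMeasureOfNonnegFn μ)
    (η : ℝ) (hη : η ∈ Set.Ioo (0 : ℝ) 1)
    (hμ : ∫⁻ ξ, ENNReal.ofReal ((1 + ‖ξ‖ ^ 2) ^ (-η)) ∂μ < ⊤) :
    ∃ C : ℝ, 0 < C ∧ ∀ t h : ℝ, 0 < t → 0 < h →
      (⨆ η' : EuclideanSpace ℝ (Fin d),
          ∫⁻ ξ, ENNReal.ofReal
            ((Real.exp (-(t + h) * ‖ξ + η'‖ ^ 2 / 2) - Real.exp (-t * ‖ξ + η'‖ ^ 2 / 2)) ^ 2) ∂μ)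
        ≤ ENNReal.ofReal (C * h ^ (1 - η) * t ^ (-(1 - η))) * heatK μ (t / 2) := by
  obtain ⟨hη0, hη1⟩ := hη
  refine ⟨1, one_pos, fun t h ht hh => ?_⟩
  set θ : ℝ := 1 - η with hθ
  have hθ0 : 0 < θ := by rw [hθ]; linarith
  have hθ1 : θ ≤ 1 := by rw [hθ]; linarith
  have hs2 : 0 < t / 2 := by linarith
  apply iSup_le
  intro w
  calc ∫⁻ ξ, ENNReal.ofReal
        ((rexp (-(t + h) * ‖ξ + w‖ ^ 2 / 2) - rexp (-t * ‖ξ + w‖ ^ 2 / 2)) ^ 2) ∂μ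
      ≤ ∫⁻ ξ, ENNReal.ofReal (h ^ θ * t ^ (-θ)) *
          ENNReal.ofReal (rexp (-(t / 2) * ‖ξ + w‖ ^ 2)) ∂μ := by
        apply lintegral_mono
        intro ξ
        dsimp only
        rw [← ENNReal.ofReal_mul (by positivity)]
        exact ENNReal.ofReal_le_ofReal
          (time_increment_pointwise hθ0 hθ1 ht hh (by positivity))
    _ = ENNReal.ofReal (h ^ θ * t ^ (-θ)) *
          ∫⁻ ξ, ENNReal.ofReal (rexp (-(t / 2) * ‖ξ + w‖ ^ 2)) ∂μ :=
        lintegral_const_mul' _ _ ENNReal.ofReal_ne_top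
    _ ≤ ENNReal.ofReal (h ^ θ * t ^ (-θ)) *
          ∫⁻ ξ, ENNReal.ofReal (rexp (-(t / 2) * ‖ξ‖ ^ 2)) ∂μ := by
        apply mul_le_mul_right
        have hsb := shift_bound μ hspec (le_of_lt hη1) hμ hs2 (-w)
        simpa [sub_neg_eq_add] using hsb
    _ = ENNReal.ofReal (1 * h ^ θ * t ^ (-θ)) * heatK μ (t / 2) := by
        rw [heatK, one_mul]
end

section
/- Let η ∈ (0,1). Then ∫_{ℝ^d} (1+|ξ|²)^{−η} μ(dξ) < ∞ if and only if ∫_0^1 k(s) / s^{1−η} ds < ∞. -/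
open MeasureTheory Real ENNReal

/-- The auxiliary integral `F(η, r) = ∫_0^1 e^{-s r} s^{η-1} ds` (as a lower Lebesgue
integral). -/
noncomputable def Fint (η r : ℝ) : ℝ≥0∞ :=
  ∫⁻ s in Set.Ioc (0:ℝ) 1, ENNReal.ofReal (Real.exp (-s * r)) * ENNReal.ofReal (s ^ (η-1))

lemma lint_rpow_Ioc {c : ℝ} (hc : -1 < c) {a : ℝ} (ha : 0 < a) :
    ∫⁻ s in Set.Ioc 0 a, ENNReal.ofReal (s ^ c) = ENNReal.ofReal (a ^ (c+1) / (c+1)) := by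
  rw [← ofReal_integral_eq_lintegral_ofReal]
  · rw [← intervalIntegral.integral_of_le ha.le, integral_rpow (Or.inl hc)]
    rw [Real.zero_rpow (by linarith : c + 1 ≠ 0)]
    ring_nf
  · exact (intervalIntegral.intervalIntegrable_rpow' hc).1
  · exact (ae_restrict_iff' measurableSet_Ioc).2 (ae_of_all _ fun s hs => Real.rpow_nonneg hs.1.le c)

lemma lint_rpow_Ioc_tail {c : ℝ} (hc : c < -1) {b : ℝ} (hb : 0 < b) (hb1 : b ≤ 1) :
    ∫⁻ s in Set.Ioc b 1, ENNReal.ofReal (s ^ c) ≤ ENNReal.ofReal (b ^ (c+1) / (-(c+1))) := by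
  have h0 : (0:ℝ) ∉ Set.uIcc b 1 := by
    rw [Set.mem_uIcc]; push_neg; constructor <;> intro h <;> linarith
  rw [← ofReal_integral_eq_lintegral_ofReal]
  · apply ENNReal.ofReal_le_ofReal
    rw [← intervalIntegral.integral_of_le hb1, integral_rpow (Or.inr ⟨by linarith, h0⟩)]
    rw [Real.one_rpow]
    have heq : (1 - b ^ (c+1)) / (c+1) = (b ^ (c+1) - 1) / (-(c+1)) := by
      rw [div_neg_eq_neg_div, ← neg_div, neg_sub]
    have hb' : 0 ≤ b ^ (c+1) := Real.rpow_nonneg hb.le _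
    rw [heq]
    gcongr
    · linarith
    · linarith
  · exact (intervalIntegral.intervalIntegrable_rpow (Or.inr h0)).1
  · exact (ae_restrict_iff' measurableSet_Ioc).2 (ae_of_all _ fun s hs => Real.rpow_nonneg (lt_trans hb hs.1).le c)

lemma le_Fint {η : ℝ} (hη0 : 0 < η) (hη1 : η < 1) {r : ℝ} (hr : 0 ≤ r) :
    ENNReal.ofReal ((1+r) ^ (-η)) ≤ ENNReal.ofReal (Real.exp 1 * η) * Fint η r := by
  set s₀ : ℝ := (1+r)⁻¹ with hs₀
  have h1r : (0:ℝ) < 1 + r := by linarith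
  have hs₀0 : 0 < s₀ := by positivity
  have hs₀1 : s₀ ≤ 1 := by
    rw [hs₀, inv_le_one_iff₀]; right; linarith
  have step1 : ENNReal.ofReal (Real.exp (-1)) * ENNReal.ofReal (s₀ ^ η / η) ≤ Fint η r := by
    have := lint_rpow_Ioc (by linarith : (-1:ℝ) < η - 1) hs₀0
    simp only [sub_add_cancel] at this
    rw [← this, ← lintegral_const_mul' _ _ ofReal_ne_top]
    refine le_trans ?_ (lintegral_mono_set (Set.Ioc_subset_Ioc_right hs₀1))
    apply setLIntegral_mono' measurableSet_Ioc
    intro s hs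
    have hsr : s * r ≤ 1 := by
      calc s * r ≤ s₀ * r := by apply mul_le_mul_of_nonneg_right hs.2 hr
      _ = r / (1+r) := by rw [hs₀]; ring
      _ ≤ 1 := by rw [div_le_one h1r]; linarith
    exact mul_le_mul' (ENNReal.ofReal_le_ofReal (Real.exp_le_exp.2 (by linarith))) le_rfl
  calc ENNReal.ofReal ((1+r) ^ (-η))
      = ENNReal.ofReal (Real.exp 1 * η * (Real.exp (-1) * (s₀ ^ η / η))) := by
        congr 1
        rw [Real.exp_neg]
        have hs : s₀ ^ η = (1+r) ^ (-η) := by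
          rw [hs₀, Real.inv_rpow h1r.le, ← Real.rpow_neg h1r.le]
        rw [hs]
        field_simp
    _ = ENNReal.ofReal (Real.exp 1 * η) * (ENNReal.ofReal (Real.exp (-1)) * ENNReal.ofReal (s₀ ^ η / η)) := by
        rw [ENNReal.ofReal_mul (by positivity), ENNReal.ofReal_mul (Real.exp_nonneg _),
          ENNReal.ofReal_mul (Real.exp_nonneg _)]
    _ ≤ ENNReal.ofReal (Real.exp 1 * η) * Fint η r := by gcongr

lemma Fint_le {η : ℝ} (hη0 : 0 < η) (hη1 : η < 1) {r : ℝ} (hr : 0 ≤ r) :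
    Fint η r ≤ ENNReal.ofReal ((2/η + 2/(1-η)) * (1+r) ^ (-η)) := by
  have h1η : (0:ℝ) < 1 - η := by linarith
  have h1r : (0:ℝ) < 1 + r := by linarith
  have hpt : ∀ a : ℝ, 0 < a → ∫⁻ s in Set.Ioc (0:ℝ) a,
      ENNReal.ofReal (Real.exp (-s * r)) * ENNReal.ofReal (s ^ (η-1)) ≤ ENNReal.ofReal (a ^ η / η) := by
    intro a ha
    have heq := lint_rpow_Ioc (by linarith : (-1:ℝ) < η - 1) ha
    simp only [sub_add_cancel] at heq
    rw [← heq]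
    apply setLIntegral_mono' measurableSet_Ioc
    intro s hs
    calc ENNReal.ofReal (Real.exp (-s * r)) * ENNReal.ofReal (s ^ (η-1))
        ≤ 1 * ENNReal.ofReal (s ^ (η-1)) := by
          gcongr
          exact ENNReal.ofReal_le_one.2 (Real.exp_le_one_iff.2 (by nlinarith [hs.1]))
      _ = ENNReal.ofReal (s ^ (η-1)) := one_mul _
  rcases le_or_gt r 1 with hr1 | hr1
  · calc Fint η r ≤ ENNReal.ofReal (1 ^ η / η) := hpt 1 one_pos
      _ ≤ ENNReal.ofReal ((2/η + 2/(1-η)) * (1+r) ^ (-η)) := by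
          apply ENNReal.ofReal_le_ofReal
          rw [Real.one_rpow]
          have h2 : (1+r) ^ η ≤ 2 := by
            calc (1+r) ^ η ≤ (2:ℝ) ^ η :=
                  Real.rpow_le_rpow h1r.le (by linarith) hη0.le
              _ ≤ (2:ℝ) ^ (1:ℝ) :=
                  Real.rpow_le_rpow_of_exponent_le (by norm_num) hη1.le
              _ = 2 := Real.rpow_one 2
          have hp : (0:ℝ) < (1+r) ^ η := Real.rpow_pos_of_pos h1r η
          rw [Real.rpow_neg h1r.le]
          have h3 : (2:ℝ)⁻¹ ≤ ((1+r) ^ η)⁻¹ := inv_anti₀ hp h2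
          calc 1/η = (2/η) * 2⁻¹ := by field_simp
            _ ≤ (2/η + 2/(1-η)) * ((1+r)^η)⁻¹ := by
                apply mul_le_mul _ h3 (by norm_num) (by positivity)
                have : 0 ≤ 2/(1-η) := by positivity
                linarith
  · have hrpos : (0:ℝ) < r := by linarith
    set b : ℝ := r⁻¹ with hb
    have hb0 : 0 < b := by positivity
    have hb1 : b ≤ 1 := by rw [hb, inv_le_one_iff₀]; right; linarith
    have hsplit : Fint η r = (∫⁻ s in Set.Ioc (0:ℝ) b, ENNReal.ofReal (Real.exp (-s * r)) * ENNReal.ofReal (s ^ (η-1)))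
        + ∫⁻ s in Set.Ioc b 1, ENNReal.ofReal (Real.exp (-s * r)) * ENNReal.ofReal (s ^ (η-1)) := by
      rw [Fint, ← Set.Ioc_union_Ioc_eq_Ioc hb0.le hb1,
        lintegral_union measurableSet_Ioc (Set.Ioc_disjoint_Ioc_of_le le_rfl)]
    have htail : ∫⁻ s in Set.Ioc b 1, ENNReal.ofReal (Real.exp (-s * r)) * ENNReal.ofReal (s ^ (η-1))
        ≤ ENNReal.ofReal (r⁻¹ * (b ^ (η-1) / (1-η))) := by
      calc ∫⁻ s in Set.Ioc b 1, ENNReal.ofReal (Real.exp (-s * r)) * ENNReal.ofReal (s ^ (η-1))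
          ≤ ∫⁻ s in Set.Ioc b 1, ENNReal.ofReal r⁻¹ * ENNReal.ofReal (s ^ (η-2)) := by
            apply setLIntegral_mono' measurableSet_Ioc
            intro s hs
            have hs0 : 0 < s := lt_trans hb0 hs.1
            have hsr : 0 < s * r := by positivity
            have hexp : Real.exp (-(s * r)) ≤ (s * r)⁻¹ := by
              rw [Real.exp_neg]
              exact inv_anti₀ hsr (by nlinarith [Real.add_one_le_exp (s*r)])
            have hkey : (s*r)⁻¹ * s ^ (η-1) = r⁻¹ * s ^ (η-2) := by
              rw [show (η-2) = (-1) + (η-1) by ring, Real.rpow_add hs0, Real.rpow_neg_one,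
                mul_inv]
              ring
            calc ENNReal.ofReal (Real.exp (-s * r)) * ENNReal.ofReal (s ^ (η-1))
                ≤ ENNReal.ofReal ((s*r)⁻¹) * ENNReal.ofReal (s ^ (η-1)) :=
                  mul_le_mul' (ENNReal.ofReal_le_ofReal (by rw [neg_mul]; exact hexp)) le_rfl
              _ = ENNReal.ofReal ((s*r)⁻¹ * s ^ (η-1)) := by
                  rw [← ENNReal.ofReal_mul (by positivity)]
              _ = ENNReal.ofReal (r⁻¹ * s ^ (η-2)) := by rw [hkey]
              _ = ENNReal.ofReal r⁻¹ * ENNReal.ofReal (s ^ (η-2)) := by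
                  rw [← ENNReal.ofReal_mul (by positivity)]
      _ ≤ ENNReal.ofReal (r⁻¹ * (b ^ (η-1) / (1-η))) := by
            rw [lintegral_const_mul' _ _ ofReal_ne_top,
              ENNReal.ofReal_mul (by positivity : (0:ℝ) ≤ r⁻¹)]
            gcongr
            calc ∫⁻ s in Set.Ioc b 1, ENNReal.ofReal (s ^ (η-2))
                ≤ ENNReal.ofReal (b ^ (η-2+1) / (-(η-2+1))) :=
                  lint_rpow_Ioc_tail (by linarith) hb0 hb1
              _ = ENNReal.ofReal (b ^ (η-1) / (1-η)) := by
                  rw [show η-2+1 = η-1 by ring, neg_sub]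
    have hbpow : b ^ η = r ^ (-η) := by
      rw [hb, Real.inv_rpow hrpos.le, ← Real.rpow_neg hrpos.le]
    have hbpow2 : r⁻¹ * b ^ (η-1) = r ^ (-η) := by
      rw [hb, Real.inv_rpow hrpos.le, ← Real.rpow_neg hrpos.le, ← Real.rpow_neg_one r,
        ← Real.rpow_add hrpos]
      ring_nf
    have hfinal : r ^ (-η) / η + r ^ (-η) / (1-η) ≤ (2/η + 2/(1-η)) * (1+r) ^ (-η) := by
      have hx : (0:ℝ) < r ^ η := Real.rpow_pos_of_pos hrpos η
      have hy : (0:ℝ) < (1+r) ^ η := Real.rpow_pos_of_pos h1r η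
      have hxy : (1+r) ^ η ≤ 2 * r ^ η := by
        calc (1+r) ^ η ≤ (2*r) ^ η := Real.rpow_le_rpow h1r.le (by linarith) hη0.le
          _ = 2 ^ η * r ^ η := Real.mul_rpow (by norm_num) hrpos.le
          _ ≤ 2 * r ^ η := by
              apply mul_le_mul_of_nonneg_right _ hx.le
              calc (2:ℝ) ^ η ≤ (2:ℝ) ^ (1:ℝ) :=
                    Real.rpow_le_rpow_of_exponent_le (by norm_num) hη1.le
                _ = 2 := Real.rpow_one 2
      rw [Real.rpow_neg hrpos.le, Real.rpow_neg h1r.le]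
      have h5 : (2 * r ^ η)⁻¹ ≤ ((1+r) ^ η)⁻¹ := inv_anti₀ hy hxy
      calc (r ^ η)⁻¹ / η + (r ^ η)⁻¹ / (1-η) = (2/η + 2/(1-η)) * (2 * r ^ η)⁻¹ := by
            field_simp
        _ ≤ (2/η + 2/(1-η)) * ((1+r) ^ η)⁻¹ := by
            apply mul_le_mul_of_nonneg_left h5 (by positivity)
    calc Fint η r ≤ ENNReal.ofReal (b ^ η / η) + ENNReal.ofReal (r⁻¹ * (b ^ (η-1) / (1-η))) := by
          rw [hsplit]; exact add_le_add (hpt b hb0) htail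
      _ = ENNReal.ofReal (r ^ (-η) / η + r ^ (-η) / (1-η)) := by
          rw [← ENNReal.ofReal_add (by positivity) (by positivity)]
          congr 1
          rw [hbpow, ← mul_div_assoc, hbpow2]
      _ ≤ ENNReal.ofReal ((2/η + 2/(1-η)) * (1+r) ^ (-η)) := ENNReal.ofReal_le_ofReal hfinal

/-- For `η ∈ (0,1)`: `∫ (1+|ξ|²)^{-η} μ(dξ) < ∞` iff `∫_0^1 k(s)/s^{1-η} ds < ∞`. -/
theorem spectral_condition_iff_k_integrable (d : ℕ) (hd : 1 ≤ d)
    (μ : Measure (EuclideanSpace ℝ (Fin d))) (η : ℝ) (hη : η ∈ Set.Ioo (0 : ℝ) 1) :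
    (∫⁻ ξ, ENNReal.ofReal ((1 + ‖ξ‖ ^ 2) ^ (-η)) ∂μ < ⊤) ↔
      (∫⁻ s in Set.Ioo (0 : ℝ) 1, heatK μ s / ENNReal.ofReal (s ^ (1 - η)) < ⊤) := by
  obtain ⟨hη0, hη1⟩ := hη
  have h1η : (0:ℝ) < 1 - η := by linarith
  have hGexp : ∀ ξ : EuclideanSpace ℝ (Fin d),
      ENNReal.ofReal (Real.exp (-1 * ‖ξ‖ ^ 2)) ≤ ENNReal.ofReal ((1 + ‖ξ‖ ^ 2) ^ (-η)) := by
    intro ξ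
    apply ENNReal.ofReal_le_ofReal
    have hr : (0:ℝ) ≤ ‖ξ‖ ^ 2 := sq_nonneg _
    have h1r : (0:ℝ) < 1 + ‖ξ‖ ^ 2 := by linarith
    calc Real.exp (-1 * ‖ξ‖ ^ 2) = (Real.exp (‖ξ‖ ^ 2))⁻¹ := by
          rw [show (-1 : ℝ) * ‖ξ‖ ^ 2 = -(‖ξ‖ ^ 2) by ring, Real.exp_neg]
      _ ≤ (1 + ‖ξ‖ ^ 2)⁻¹ := inv_anti₀ h1r (by nlinarith [Real.add_one_le_exp (‖ξ‖ ^ 2)])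
      _ = (1 + ‖ξ‖ ^ 2) ^ (-1 : ℝ) := (Real.rpow_neg_one _).symm
      _ ≤ (1 + ‖ξ‖ ^ 2) ^ (-η) :=
          Real.rpow_le_rpow_of_exponent_le (by linarith) (by linarith)
  by_cases htop : heatK μ 1 = ⊤
  · refine iff_of_false ?_ ?_
    · apply not_lt.2
      refine le_trans (le_of_eq htop.symm) ?_
      exact lintegral_mono hGexp
    · apply not_lt.2
      have hint : ∀ s ∈ Set.Ioo (0:ℝ) 1,
          heatK μ s / ENNReal.ofReal (s ^ (1 - η)) = ⊤ := by
        intro s hs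
        have h1 : heatK μ s = ⊤ := by
          refine top_le_iff.1 (le_trans (le_of_eq htop.symm) ?_)
          apply lintegral_mono
          intro ξ
          apply ENNReal.ofReal_le_ofReal
          apply Real.exp_le_exp.2
          nlinarith [sq_nonneg ‖ξ‖, hs.2]
        rw [h1, ENNReal.top_div_of_ne_top ofReal_ne_top]
      rw [setLIntegral_congr_fun measurableSet_Ioo hint, setLIntegral_const,
        Real.volume_Ioo]
      simp
  · -- the auxiliary finite measure ν = μ.withDensity (e^{-‖ξ‖²})
    set gw : EuclideanSpace ℝ (Fin d) → ℝ≥0∞ := fun ξ => ENNReal.ofReal (Real.exp (-(‖ξ‖ ^ 2)))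
      with hgw
    have hgwm : Measurable gw := by fun_prop
    set ν : Measure (EuclideanSpace ℝ (Fin d)) := μ.withDensity gw with hν
    haveI : IsFiniteMeasure ν := by
      constructor
      rw [hν, withDensity_apply _ MeasurableSet.univ, setLIntegral_univ]
      have : ∫⁻ ξ, gw ξ ∂μ = heatK μ 1 := by
        refine lintegral_congr fun ξ => ?_
        simp only [hgw]
        norm_num
      rw [this]
      exact lt_top_iff_ne_top.2 htop
    have hconv : ∀ h : EuclideanSpace ℝ (Fin d) → ℝ≥0∞, Measurable h →
        ∫⁻ ξ, h ξ ∂μ = ∫⁻ ξ, h ξ * ENNReal.ofReal (Real.exp (‖ξ‖ ^ 2)) ∂ν := by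
      intro h hm
      rw [hν, lintegral_withDensity_eq_lintegral_mul μ hgwm (by fun_prop)]
      apply lintegral_congr
      intro ξ
      symm
      have : gw ξ * ENNReal.ofReal (Real.exp (‖ξ‖ ^ 2)) = 1 := by
        rw [hgw, ← ENNReal.ofReal_mul (Real.exp_nonneg _), ← Real.exp_add]
        norm_num
      calc (gw * fun ξ => h ξ * ENNReal.ofReal (Real.exp (‖ξ‖ ^ 2))) ξ
          = h ξ * (gw ξ * ENNReal.ofReal (Real.exp (‖ξ‖ ^ 2))) := by
            simp [Pi.mul_apply]; ring
        _ = h ξ := by rw [this, mul_one]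
    have hFm : Measurable fun ξ : EuclideanSpace ℝ (Fin d) => Fint η (‖ξ‖ ^ 2) := by
      have h1 : Measurable fun r : ℝ => Fint η r := by
        apply Measurable.lintegral_prod_right'
          (f := fun p : ℝ × ℝ => ENNReal.ofReal (Real.exp (-p.2 * p.1)) * ENNReal.ofReal (p.2 ^ (η-1)))
        fun_prop
      exact h1.comp (by fun_prop)
    have key : (∫⁻ s in Set.Ioo (0:ℝ) 1, heatK μ s / ENNReal.ofReal (s ^ (1 - η)))
        = ∫⁻ ξ, Fint η (‖ξ‖ ^ 2) ∂μ := by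
      rw [Measure.restrict_congr_set MeasureTheory.Ioo_ae_eq_Ioc]
      have congr1 : ∀ s ∈ Set.Ioc (0:ℝ) 1, heatK μ s / ENNReal.ofReal (s ^ (1-η))
          = ∫⁻ ξ, (ENNReal.ofReal (Real.exp (-s * ‖ξ‖ ^ 2)) * ENNReal.ofReal (s ^ (η-1)))
              * ENNReal.ofReal (Real.exp (‖ξ‖ ^ 2)) ∂ν := by
        intro s hs
        have hs0 : (0:ℝ) < s := hs.1
        have hpos : 0 < s ^ (1-η) := Real.rpow_pos_of_pos hs0 _
        have hinv : (ENNReal.ofReal (s ^ (1-η)))⁻¹ = ENNReal.ofReal (s ^ (η-1)) := by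
          rw [← ENNReal.ofReal_inv_of_pos hpos, ← Real.rpow_neg hs0.le,
            show -(1-η) = η-1 by ring]
        rw [div_eq_mul_inv, hinv, heatK, ← lintegral_mul_const' _ _ ofReal_ne_top,
          hconv (fun ξ => ENNReal.ofReal (Real.exp (-s * ‖ξ‖ ^ 2)) * ENNReal.ofReal (s ^ (η-1)))
            (by fun_prop)]
      rw [setLIntegral_congr_fun measurableSet_Ioc congr1]
      have hswap := lintegral_lintegral_swap (μ := volume.restrict (Set.Ioc (0:ℝ) 1)) (ν := ν)
        (f := fun (s : ℝ) (ξ : EuclideanSpace ℝ (Fin d)) =>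
          (ENNReal.ofReal (Real.exp (-s * ‖ξ‖ ^ 2)) * ENNReal.ofReal (s ^ (η-1)))
            * ENNReal.ofReal (Real.exp (‖ξ‖ ^ 2)))
        (Measurable.aemeasurable (by fun_prop))
      rw [hswap, hconv (fun ξ => Fint η (‖ξ‖ ^ 2)) hFm]
      apply lintegral_congr
      intro ξ
      exact lintegral_mul_const' _ _ ofReal_ne_top
    rw [key]
    have hC : (0:ℝ) ≤ 2/η + 2/(1-η) := by positivity
    constructor
    · intro h
      calc ∫⁻ ξ, Fint η (‖ξ‖ ^ 2) ∂μ
          ≤ ∫⁻ ξ, ENNReal.ofReal (2/η + 2/(1-η)) * ENNReal.ofReal ((1 + ‖ξ‖ ^ 2) ^ (-η)) ∂μ := by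
            apply lintegral_mono
            intro ξ
            have := Fint_le hη0 hη1 (sq_nonneg ‖ξ‖)
            rwa [ENNReal.ofReal_mul hC] at this
        _ = ENNReal.ofReal (2/η + 2/(1-η)) * ∫⁻ ξ, ENNReal.ofReal ((1 + ‖ξ‖ ^ 2) ^ (-η)) ∂μ :=
            lintegral_const_mul' _ _ ofReal_ne_top
        _ < ⊤ := ENNReal.mul_lt_top ofReal_lt_top h
    · intro h
      calc ∫⁻ ξ, ENNReal.ofReal ((1 + ‖ξ‖ ^ 2) ^ (-η)) ∂μ
          ≤ ∫⁻ ξ, ENNReal.ofReal (Real.exp 1 * η) * Fint η (‖ξ‖ ^ 2) ∂μ :=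
            lintegral_mono fun ξ => le_Fint hη0 hη1 (sq_nonneg ‖ξ‖)
        _ = ENNReal.ofReal (Real.exp 1 * η) * ∫⁻ ξ, Fint η (‖ξ‖ ^ 2) ∂μ :=
            lintegral_const_mul' _ _ ofReal_ne_top
        _ < ⊤ := ENNReal.mul_lt_top ofReal_lt_top h
end

section
/- Assume μ satisfies Dalang's condition ∫_{ℝ^d} (1+|ξ|²)^{−1} μ(dξ) < ∞. Then for every t > 0 and every γ > 0, the series H(t;γ) := ∑_{n≥0} γ^n h_n(t) converges, i.e. H(t;γ) < ∞. -/
open MeasureTheory Real ENNReal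

/-- `h_0(t) = 1` and, for `n = m + 1 ≥ 1`,
`h_n(t) = ∫_{0 < t_1 < ⋯ < t_n < t} k(t_2 - t_1) ⋯ k(t_n - t_{n-1}) k(t - t_n) dt_1 ⋯ dt_n`. -/
noncomputable def hSeq {d : ℕ} (μ : Measure (EuclideanSpace ℝ (Fin d))) : ℕ → ℝ → ℝ≥0∞
  | 0, _ => 1
  | (m + 1), t =>
    ∫⁻ s in {s : Fin (m + 1) → ℝ | StrictMono s ∧ 0 < s 0 ∧ s (Fin.last m) < t},
      (∏ j : Fin m, heatK μ (s j.succ - s j.castSucc)) * heatK μ (t - s (Fin.last m))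

open Set Filter

/-! ### Auxiliary lemmas -/

/-- The measurable equivalence `x ↦ t - x` of `ℝ`. -/
def subLeftEquiv (t : ℝ) : ℝ ≃ᵐ ℝ where
  toFun := fun x => t - x
  invFun := fun x => t - x
  left_inv := fun x => by ring
  right_inv := fun x => by ring
  measurable_toFun := measurable_const.sub measurable_id
  measurable_invFun := measurable_const.sub measurable_id

lemma lintegral_comp_const_sub (g : ℝ → ℝ≥0∞) (t : ℝ) :
    ∫⁻ x, g (t - x) = ∫⁻ x, g x := by
  have hmap : Measure.map (⇑(subLeftEquiv t)) (volume : Measure ℝ) = volume := by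
    have hcoe : (⇑(subLeftEquiv t) : ℝ → ℝ) = (fun y => t + y) ∘ (fun x : ℝ => -x) := by
      funext x; show t - x = t + (-x); ring
    rw [hcoe, ← Measure.map_map (measurable_const_add t) measurable_neg,
      Measure.map_neg_eq_self, map_add_left_eq_self]
  have h := lintegral_map_equiv (μ := (volume : Measure ℝ)) g (subLeftEquiv t)
  rw [hmap] at h
  exact h.symm

lemma lintegral_Ioo_comp_sub (g : ℝ → ℝ≥0∞) (t : ℝ) :
    ∫⁻ x in Ioo 0 t, g (t - x) = ∫⁻ x in Ioo 0 t, g x := by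
  rw [← lintegral_indicator measurableSet_Ioo, ← lintegral_indicator measurableSet_Ioo]
  have h : ∀ x, (Ioo (0:ℝ) t).indicator (fun x => g (t - x)) x
      = (Ioo 0 t).indicator g (t - x) := by
    intro x
    by_cases hx : x ∈ Ioo (0:ℝ) t
    · have hx' : t - x ∈ Ioo (0:ℝ) t := ⟨by linarith [hx.2], by linarith [hx.1]⟩
      simp [indicator_of_mem, hx, hx']
    · have hx' : t - x ∉ Ioo (0:ℝ) t := fun h =>
        hx ⟨by rcases h with ⟨h1, h2⟩; linarith, by rcases h with ⟨h1, h2⟩; linarith⟩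
      simp [indicator_of_notMem, hx, hx']
  simp_rw [h]
  exact lintegral_comp_const_sub ((Ioo (0:ℝ) t).indicator g) t

lemma lintegral_exp_neg_mul_Ioi {c : ℝ} (hc : 0 < c) :
    ∫⁻ s in Ioi (0:ℝ), ENNReal.ofReal (Real.exp (-(c * s))) = ENNReal.ofReal c⁻¹ := by
  rw [← ofReal_integral_eq_lintegral_ofReal]
  · congr 1
    have h := integral_comp_mul_left_Ioi (fun u => Real.exp (-u)) 0 hc
    simp only [mul_zero, integral_exp_neg_Ioi, neg_zero, Real.exp_zero, smul_eq_mul,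
      mul_one] at h
    exact h
  · have := exp_neg_integrableOn_Ioi 0 hc
    simpa [neg_mul, IntegrableOn] using this
  · exact Filter.Eventually.of_forall fun x => (Real.exp_pos _).le

lemma measurableSet_strictMono {k : ℕ} :
    MeasurableSet {y : Fin k → ℝ | StrictMono y} := by
  have : {y : Fin k → ℝ | StrictMono y} =
      ⋂ (i : Fin k), ⋂ (j : Fin k), ⋂ (_ : i < j), {y : Fin k → ℝ | y i < y j} := by
    ext y
    simp only [Set.mem_setOf_eq, Set.mem_iInter]
    exact ⟨fun h i j hij => h hij, fun h a b hab => h a b hab⟩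
  rw [this]
  exact MeasurableSet.iInter fun i => MeasurableSet.iInter fun j =>
    MeasurableSet.iInter fun _ =>
      measurableSet_lt (measurable_pi_apply i) (measurable_pi_apply j)

lemma measurableSet_hSet {k : ℕ} (x : ℝ) :
    MeasurableSet {y : Fin (k + 1) → ℝ | StrictMono y ∧ 0 < y 0 ∧ y (Fin.last k) < x} := by
  refine (measurableSet_strictMono).inter (MeasurableSet.inter ?_ ?_)
  · exact measurableSet_lt measurable_const (measurable_pi_apply 0)
  · exact measurableSet_lt (measurable_pi_apply _) measurable_const

section main
variable {d : ℕ} (μ : Measure (EuclideanSpace ℝ (Fin d)))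

lemma heatK_antitone : Antitone (heatK μ) := fun a b hab =>
  lintegral_mono fun ξ => ENNReal.ofReal_le_ofReal (Real.exp_le_exp.2 (by
    have h := sq_nonneg ‖ξ‖
    nlinarith))

lemma heatK_measurable : Measurable (heatK μ) := (heatK_antitone μ).measurable

/-- The Laplace-type quantity `K(β) = ∫_0^∞ e^{-β s} k(s) ds`. -/
noncomputable def Kbeta (β : ℝ) : ℝ≥0∞ :=
  ∫⁻ s in Ioi (0:ℝ), ENNReal.ofReal (Real.exp (-β * s)) * heatK μ s

lemma sigmaFinite_of_dalang
    (hD : ∫⁻ ξ, ENNReal.ofReal ((1 + ‖ξ‖ ^ 2)⁻¹) ∂μ < ⊤) : SigmaFinite μ := by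
  have hmeas : AEMeasurable (fun ξ : EuclideanSpace ℝ (Fin d) =>
      ENNReal.ofReal ((1 + ‖ξ‖ ^ 2)⁻¹)) μ := by fun_prop
  refine ⟨⟨⟨fun n => Metric.closedBall 0 n, fun _ => trivial, fun n => ?_, ?_⟩⟩⟩
  · set ε : ℝ≥0∞ := ENNReal.ofReal ((1 + (n:ℝ) ^ 2)⁻¹) with hε
    have hεpos : 0 < ε := by
      rw [hε]; apply ENNReal.ofReal_pos.2; positivity
    have hsub : Metric.closedBall (0 : EuclideanSpace ℝ (Fin d)) n ⊆
        {ξ | ε ≤ ENNReal.ofReal ((1 + ‖ξ‖ ^ 2)⁻¹)} := by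
      intro ξ hξ
      have hn : ‖ξ‖ ≤ n := by simpa using hξ
      have h0 : (0:ℝ) ≤ ‖ξ‖ := norm_nonneg _
      refine ENNReal.ofReal_le_ofReal ?_
      apply inv_anti₀ (by positivity)
      nlinarith
    have hm := mul_meas_ge_le_lintegral₀ hmeas ε
    have h1 : ε * μ (Metric.closedBall 0 n) ≤
        ∫⁻ ξ, ENNReal.ofReal ((1 + ‖ξ‖ ^ 2)⁻¹) ∂μ :=
      le_trans (mul_le_mul_right (measure_mono hsub) ε) hm
    have h2 : ε * μ (Metric.closedBall 0 n) ≠ ⊤ := ne_top_of_le_ne_top hD.ne h1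
    rcases lt_or_eq_of_le (le_top : μ (Metric.closedBall 0 n) ≤ ⊤) with h | h
    · exact h
    · exfalso; apply h2; rw [h, ENNReal.mul_top hεpos.ne']
  · refine Set.eq_univ_iff_forall.2 fun ξ => ?_
    obtain ⟨n, hn⟩ := exists_nat_ge ‖ξ‖
    exact Set.mem_iUnion.2 ⟨n, by simpa using hn⟩

lemma Kbeta_eq [SigmaFinite μ] {β : ℝ} (hβ : 0 < β) :
    Kbeta μ β = ∫⁻ ξ, ENNReal.ofReal ((β + ‖ξ‖ ^ 2)⁻¹) ∂μ := by
  have step1 : Kbeta μ β = ∫⁻ s in Ioi (0:ℝ),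
      ∫⁻ ξ, ENNReal.ofReal (Real.exp (-((β + ‖ξ‖ ^ 2) * s))) ∂μ := by
    refine setLIntegral_congr_fun measurableSet_Ioi (fun s _ => ?_)
    rw [show ENNReal.ofReal (Real.exp (-β * s)) * heatK μ s
        = ENNReal.ofReal (Real.exp (-β * s)) *
          ∫⁻ ξ, ENNReal.ofReal (Real.exp (-s * ‖ξ‖ ^ 2)) ∂μ from rfl,
      ← lintegral_const_mul _ (by fun_prop)]
    congr 1; funext ξ
    rw [← ENNReal.ofReal_mul (Real.exp_pos _).le, ← Real.exp_add]
    congr 2; ring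
  rw [step1, lintegral_lintegral_swap (by fun_prop)]
  congr 1; funext ξ
  have hc : 0 < β + ‖ξ‖ ^ 2 := by positivity
  exact lintegral_exp_neg_mul_Ioi hc

lemma tendsto_dalang_integral
    (hD : ∫⁻ ξ, ENNReal.ofReal ((1 + ‖ξ‖ ^ 2)⁻¹) ∂μ < ⊤) :
    Tendsto (fun n : ℕ => ∫⁻ ξ, ENNReal.ofReal (((n:ℝ) + 1 + ‖ξ‖ ^ 2)⁻¹) ∂μ)
      atTop (nhds 0) := by
  have h := tendsto_lintegral_of_dominated_convergence
    (μ := μ) (F := fun n ξ => ENNReal.ofReal (((n:ℝ) + 1 + ‖ξ‖ ^ 2)⁻¹))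
    (f := fun _ => 0)
    (fun ξ => ENNReal.ofReal ((1 + ‖ξ‖ ^ 2)⁻¹))
    (fun n => by fun_prop)
    (fun n => Filter.Eventually.of_forall fun ξ => by
      refine ENNReal.ofReal_le_ofReal ?_
      have h0 : (0:ℝ) ≤ ‖ξ‖ ^ 2 := sq_nonneg _
      apply inv_anti₀ (by positivity)
      have : (0:ℝ) ≤ (n:ℝ) := Nat.cast_nonneg n
      linarith)
    hD.ne
    (Filter.Eventually.of_forall fun ξ => by
      have h1 : Tendsto (fun n : ℕ => ((n:ℝ) + 1 + ‖ξ‖ ^ 2)) atTop atTop := by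
        apply tendsto_atTop_add_const_right
        apply tendsto_atTop_add_const_right
        exact tendsto_natCast_atTop_atTop
      have h2 : Tendsto (fun n : ℕ => ((n:ℝ) + 1 + ‖ξ‖ ^ 2)⁻¹) atTop (nhds 0) :=
        tendsto_inv_atTop_zero.comp h1
      have h3 := (ENNReal.continuous_ofReal.tendsto 0).comp h2
      simpa [Function.comp_def] using h3)
  simpa using h

lemma hSeq_succ (n : ℕ) {t : ℝ} (ht : 0 < t) :
    hSeq μ (n + 1) t = ∫⁻ x in Ioo 0 t, hSeq μ n x * heatK μ (t - x) := by
  clear ht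
  cases n with
  | zero =>
    have hS : {s : Fin 1 → ℝ | StrictMono s ∧ 0 < s 0 ∧ s (Fin.last 0) < t}
        = (MeasurableEquiv.funUnique (Fin 1) ℝ) ⁻¹' (Ioo 0 t) := by
      ext s
      simp only [Set.mem_setOf_eq, Set.mem_preimage, Set.mem_Ioo,
        MeasurableEquiv.funUnique_apply]
      constructor
      · rintro ⟨-, h1, h2⟩; exact ⟨h1, h2⟩
      · rintro ⟨h1, h2⟩; exact ⟨Subsingleton.strictMono s, h1, h2⟩
    simp only [hSeq, Finset.univ_eq_empty, Finset.prod_empty, one_mul]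
    rw [hS]
    have key := (MeasureTheory.volume_preserving_funUnique (Fin 1) ℝ).setLIntegral_comp_preimage_emb
      (MeasurableEquiv.funUnique (Fin 1) ℝ).measurableEmbedding
      (fun x => heatK μ (t - x)) (Ioo 0 t)
    exact key
  | succ m =>
    set S : Set (Fin (m + 2) → ℝ) :=
      {s | StrictMono s ∧ 0 < s 0 ∧ s (Fin.last (m + 1)) < t} with hSdef
    set F : (Fin (m + 2) → ℝ) → ℝ≥0∞ := fun s =>
      (∏ j : Fin (m + 1), heatK μ (s j.succ - s j.castSucc)) *
        heatK μ (t - s (Fin.last (m + 1))) with hFdef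
    set A : Set (ℝ × (Fin (m + 1) → ℝ)) :=
      {p | (StrictMono p.2 ∧ 0 < p.2 0 ∧ p.2 (Fin.last m) < p.1) ∧ p.1 < t} with hAdef
    set H : ℝ × (Fin (m + 1) → ℝ) → ℝ≥0∞ := fun p =>
      ((∏ j : Fin m, heatK μ (p.2 j.succ - p.2 j.castSucc)) *
        heatK μ (p.1 - p.2 (Fin.last m))) * heatK μ (t - p.1) with hHdef
    set E := MeasurableEquiv.piFinSuccAbove (fun _ : Fin (m + 2) => ℝ) (Fin.last (m + 1))
      with hE
    have hSmeas : MeasurableSet S := measurableSet_hSet t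
    have hAmeas : MeasurableSet A := by
      rw [hAdef]
      refine MeasurableSet.inter (MeasurableSet.inter ?_ (MeasurableSet.inter ?_ ?_)) ?_
      · exact measurable_snd measurableSet_strictMono
      · exact measurableSet_lt measurable_const ((measurable_pi_apply 0).comp measurable_snd)
      · exact measurableSet_lt ((measurable_pi_apply _).comp measurable_snd) measurable_fst
      · exact measurableSet_lt measurable_fst measurable_const
    have hHmeas : Measurable H := by
      rw [hHdef]
      refine Measurable.mul (Measurable.mul ?_ ?_) ?_
      · refine Finset.measurable_prod _ fun j _ => ?_
        exact (heatK_measurable μ).comp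
          (((measurable_pi_apply _).comp measurable_snd).sub
            ((measurable_pi_apply _).comp measurable_snd))
      · exact (heatK_measurable μ).comp
          (measurable_fst.sub ((measurable_pi_apply _).comp measurable_snd))
      · exact (heatK_measurable μ).comp (measurable_const.sub measurable_fst)
    have claim : ∀ p : ℝ × (Fin (m + 1) → ℝ), S.indicator F (E.symm p) = A.indicator H p := by
      rintro ⟨x, y⟩
      set s : Fin (m + 2) → ℝ := E.symm (x, y) with hs
      have hs_cast : ∀ j : Fin (m + 1), s j.castSucc = y j := by
        intro j
        rw [hs, hE]
        simp only [MeasurableEquiv.piFinSuccAbove_symm_apply]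
        have h1 : (Fin.last (m + 1)).succAbove j = j.castSucc := by rw [Fin.succAbove_last]
        rw [← h1]
        simp [Fin.insertNthEquiv]
      have hs_last : s (Fin.last (m + 1)) = x := by
        rw [hs, hE]
        simp only [MeasurableEquiv.piFinSuccAbove_symm_apply]
        simp [Fin.insertNthEquiv]
      have hs0 : s 0 = y 0 := by
        have h := hs_cast 0
        rwa [Fin.castSucc_zero] at h
      have key1 : ∀ i : Fin m,
          (s i.castSucc.castSucc < s i.castSucc.succ) ↔ (y i.castSucc < y i.succ) := by
        intro i
        rw [hs_cast i.castSucc, Fin.succ_castSucc, hs_cast i.succ]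
      have key2 : (s (Fin.last m).castSucc < s (Fin.last m).succ) ↔ y (Fin.last m) < x := by
        rw [hs_cast (Fin.last m), Fin.succ_last, hs_last]
      have hmono : StrictMono s ↔ StrictMono y ∧ y (Fin.last m) < x := by
        rw [Fin.strictMono_iff_lt_succ (f := s), Fin.forall_fin_succ',
          Fin.strictMono_iff_lt_succ (f := y)]
        simp only [key1, key2]
      have hmem : s ∈ S ↔ (x, y) ∈ A := by
        rw [hSdef, hAdef]
        simp only [Set.mem_setOf_eq, hmono, hs0, hs_last]
        tauto
      have hval : F s = H (x, y) := by
        rw [hFdef, hHdef]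
        simp only []
        rw [Fin.prod_univ_castSucc (f := fun j : Fin (m + 1) =>
          heatK μ (s j.succ - s j.castSucc))]
        rw [hs_last]
        congr 2
        · refine Finset.prod_congr rfl fun j _ => ?_
          rw [Fin.succ_castSucc, hs_cast j.succ, hs_cast j.castSucc]
        · rw [Fin.succ_last, hs_last, hs_cast (Fin.last m)]
      by_cases hp : (x, y) ∈ A
      · rw [Set.indicator_of_mem hp, Set.indicator_of_mem (hmem.2 hp), hval]
      · rw [Set.indicator_of_notMem hp, Set.indicator_of_notMem (fun h => hp (hmem.1 h))]
    have inner : ∀ x : ℝ, (∫⁻ y, A.indicator H (x, y)) =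
        (Ioo (0:ℝ) t).indicator (fun x' => hSeq μ (m + 1) x' * heatK μ (t - x')) x := by
      intro x
      by_cases hx : x ∈ Ioo (0:ℝ) t
      · rw [Set.indicator_of_mem hx]
        have hset : ∀ y : Fin (m + 1) → ℝ, A.indicator H (x, y)
            = ({y' : Fin (m + 1) → ℝ | StrictMono y' ∧ 0 < y' 0 ∧ y' (Fin.last m) < x}.indicator
                (fun y' => (∏ j : Fin m, heatK μ (y' j.succ - y' j.castSucc)) *
                  heatK μ (x - y' (Fin.last m))) y) * heatK μ (t - x) := by
          intro y
          by_cases hy : y ∈ {y' : Fin (m + 1) → ℝ |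
              StrictMono y' ∧ 0 < y' 0 ∧ y' (Fin.last m) < x}
          · rw [Set.indicator_of_mem (show (x, y) ∈ A from ⟨hy, hx.2⟩),
              Set.indicator_of_mem hy]
          · rw [Set.indicator_of_notMem (fun h => hy h.1),
              Set.indicator_of_notMem hy, zero_mul]
        simp_rw [hset]
        rw [lintegral_mul_const _ (Measurable.indicator (by
          refine Measurable.mul ?_ ?_
          · refine Finset.measurable_prod _ fun j _ => ?_
            exact (heatK_measurable μ).comp
              ((measurable_pi_apply _).sub (measurable_pi_apply _))
          · exact (heatK_measurable μ).comp (measurable_const.sub (measurable_pi_apply _)))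
          (measurableSet_hSet x))]
        rw [lintegral_indicator (measurableSet_hSet x)]
        rfl
      · rw [Set.indicator_of_notMem hx]
        have hzero : ∀ y : Fin (m + 1) → ℝ, A.indicator H (x, y) = 0 := by
          intro y
          apply Set.indicator_of_notMem
          rintro ⟨⟨hmono, h0, hlt⟩, hxt⟩
          exact hx ⟨lt_trans (lt_of_lt_of_le h0 (hmono.monotone (Fin.zero_le _))) hlt, hxt⟩
        simp_rw [hzero]
        exact lintegral_zero
    calc hSeq μ (m + 1 + 1) t = ∫⁻ s in S, F s := by simp only [hSeq]; rfl
      _ = ∫⁻ s, S.indicator F s := (lintegral_indicator hSmeas F).symm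
      _ = ∫⁻ p, S.indicator F (E.symm p) := by
          have hmp := (MeasureTheory.volume_preserving_piFinSuccAbove
            (fun _ : Fin (m + 2) => ℝ) (Fin.last (m + 1))).symm E
          exact (hmp.lintegral_comp_emb E.symm.measurableEmbedding _).symm
      _ = ∫⁻ p, A.indicator H p ∂(volume : Measure (ℝ × (Fin (m + 1) → ℝ))) := by
          congr 1; funext p; exact claim p
      _ = ∫⁻ x, ∫⁻ y, A.indicator H (x, y) := by
          rw [MeasureTheory.Measure.volume_eq_prod,
            lintegral_prod _ (hHmeas.indicator hAmeas).aemeasurable]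
      _ = ∫⁻ x, (Ioo (0:ℝ) t).indicator
            (fun x' => hSeq μ (m + 1) x' * heatK μ (t - x')) x := by
          congr 1; funext x; exact inner x
      _ = ∫⁻ x in Ioo 0 t, hSeq μ (m + 1) x * heatK μ (t - x) :=
          lintegral_indicator measurableSet_Ioo _

lemma hSeq_le (β : ℝ) (hβ : 0 < β) :
    ∀ n : ℕ, ∀ t : ℝ, 0 < t →
      hSeq μ n t ≤ ENNReal.ofReal (Real.exp (β * t)) * (Kbeta μ β) ^ n := by
  intro n
  induction n with
  | zero =>
    intro t ht
    simp only [hSeq, pow_zero, mul_one]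
    rw [← ENNReal.ofReal_one]
    exact ENNReal.ofReal_le_ofReal (Real.one_le_exp (by positivity))
  | succ n ih =>
    intro t ht
    rw [hSeq_succ μ n ht]
    have hmeas : Measurable fun x : ℝ =>
        ENNReal.ofReal (Real.exp (-β * (t - x))) * heatK μ (t - x) := by
      refine Measurable.mul ?_ ((heatK_measurable μ).comp (measurable_const.sub measurable_id))
      fun_prop
    calc ∫⁻ x in Ioo 0 t, hSeq μ n x * heatK μ (t - x)
        ≤ ∫⁻ x in Ioo 0 t, (ENNReal.ofReal (Real.exp (β * t)) * (Kbeta μ β) ^ n) *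
            (ENNReal.ofReal (Real.exp (-β * (t - x))) * heatK μ (t - x)) := by
          refine setLIntegral_mono' measurableSet_Ioo fun x hx => ?_
          have h1 : hSeq μ n x * heatK μ (t - x)
              ≤ (ENNReal.ofReal (Real.exp (β * x)) * (Kbeta μ β) ^ n) * heatK μ (t - x) :=
            mul_le_mul_left (ih x hx.1) _
          refine h1.trans (le_of_eq ?_)
          have h2 : ENNReal.ofReal (Real.exp (β * x)) =
              ENNReal.ofReal (Real.exp (β * t)) * ENNReal.ofReal (Real.exp (-β * (t - x))) := by
            rw [← ENNReal.ofReal_mul (Real.exp_pos _).le, ← Real.exp_add]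
            congr 1; ring
          rw [h2]; ring
      _ = (ENNReal.ofReal (Real.exp (β * t)) * (Kbeta μ β) ^ n) *
            ∫⁻ x in Ioo 0 t, ENNReal.ofReal (Real.exp (-β * (t - x))) * heatK μ (t - x) :=
          lintegral_const_mul _ hmeas
      _ ≤ (ENNReal.ofReal (Real.exp (β * t)) * (Kbeta μ β) ^ n) * Kbeta μ β := by
          refine mul_le_mul_right ?_ _
          have hrefl := lintegral_Ioo_comp_sub
            (fun u => ENNReal.ofReal (Real.exp (-β * u)) * heatK μ u) t
          rw [hrefl]
          exact lintegral_mono_set Ioo_subset_Ioi_self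
      _ = ENNReal.ofReal (Real.exp (β * t)) * (Kbeta μ β) ^ (n + 1) := by ring

end main

/-- Under Dalang's condition, `H(t;γ) = ∑_n γ^n h_n(t) < ∞` for all `t > 0`, `γ > 0`. -/
theorem H_series_converges (d : ℕ) (hd : 1 ≤ d)
    (μ : Measure (EuclideanSpace ℝ (Fin d)))
    (hDalang : ∫⁻ ξ, ENNReal.ofReal ((1 + ‖ξ‖ ^ 2)⁻¹) ∂μ < ⊤) :
    ∀ t γ : ℝ, 0 < t → 0 < γ →
      (∑' n : ℕ, (ENNReal.ofReal γ) ^ n * hSeq μ n t) < ⊤ := by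
  intro t γ ht hγ
  haveI : SigmaFinite μ := sigmaFinite_of_dalang μ hDalang
  set g : ℝ≥0∞ := ENNReal.ofReal γ with hg
  have hgne : g ≠ ⊤ := ENNReal.ofReal_ne_top
  set ε : ℝ≥0∞ := (g + 1)⁻¹ with hεdef
  have hg1ne : g + 1 ≠ ⊤ := by simp [hgne]
  have hg1pos : g + 1 ≠ 0 := by simp
  have hεpos : (0:ℝ≥0∞) < ε := ENNReal.inv_pos.2 hg1ne
  -- K(n+1) → 0
  have htendK : Tendsto (fun n : ℕ => Kbeta μ ((n:ℝ) + 1)) atTop (nhds 0) := by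
    have heq : (fun n : ℕ => Kbeta μ ((n:ℝ) + 1)) =
        fun n : ℕ => ∫⁻ ξ, ENNReal.ofReal (((n:ℝ) + 1 + ‖ξ‖ ^ 2)⁻¹) ∂μ := by
      funext n
      exact Kbeta_eq μ (by positivity)
    rw [heq]
    exact tendsto_dalang_integral μ hDalang
  obtain ⟨N, hN⟩ := (htendK.eventually_lt_const hεpos).exists
  set β : ℝ := (N:ℝ) + 1 with hβdef
  have hβpos : (0:ℝ) < β := by positivity
  have hr : g * Kbeta μ β < 1 := by
    calc g * Kbeta μ β ≤ (g + 1) * Kbeta μ β := mul_le_mul_left (le_add_right le_rfl) _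
      _ < (g + 1) * ε := (ENNReal.mul_lt_mul_iff_right hg1pos hg1ne).2 hN
      _ = 1 := ENNReal.mul_inv_cancel hg1pos hg1ne
  calc ∑' n : ℕ, g ^ n * hSeq μ n t
      ≤ ∑' n : ℕ, g ^ n * (ENNReal.ofReal (Real.exp (β * t)) * (Kbeta μ β) ^ n) :=
        ENNReal.tsum_le_tsum fun n => mul_le_mul_right (hSeq_le μ β hβpos n t ht) _
    _ = ENNReal.ofReal (Real.exp (β * t)) * ∑' n : ℕ, (g * Kbeta μ β) ^ n := by
        rw [← ENNReal.tsum_mul_left]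
        exact tsum_congr fun n => by ring
    _ < ⊤ := by
        apply ENNReal.mul_lt_top ENNReal.ofReal_lt_top
        rw [ENNReal.tsum_geometric]
        refine ENNReal.inv_lt_top.2 ?_
        exact tsub_pos_of_lt hr
end

section
/- For every integer n ≥ 0, the function t ↦ h_n(t) is nondecreasing on (0,∞): if 0 < s ≤ t then h_n(s) ≤ h_n(t). -/
open MeasureTheory Real ENNReal

/-- For every `n`, the function `t ↦ h_n(t)` is nondecreasing on `(0,∞)`. -/
theorem hSeq_mono (d : ℕ) (hd : 1 ≤ d) (μ : Measure (EuclideanSpace ℝ (Fin d))) (n : ℕ) :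
    ∀ s t : ℝ, 0 < s → s ≤ t → hSeq μ n s ≤ hSeq μ n t := by
  intro s t hs hst
  cases n with
  | zero => simp [hSeq]
  | succ m =>
    set c : ℝ := t - s with hc
    have hc0 : 0 ≤ c := by simp [hc]; linarith
    simp only [hSeq]
    set g : (Fin (m+1) → ℝ) → ℝ≥0∞ := fun u =>
      (∏ j : Fin m, heatK μ (u j.succ - u j.castSucc)) * heatK μ (t - u (Fin.last m)) with hg
    set B : Set (Fin (m+1) → ℝ) :=
      {u | StrictMono u ∧ c < u 0 ∧ u (Fin.last m) < t} with hB
    set φ : (Fin (m+1) → ℝ) → (Fin (m+1) → ℝ) := fun u => u + fun _ => c with hφ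
    have hmp : MeasurePreserving φ volume volume :=
      measurePreserving_add_right volume _
    have hemb : MeasurableEmbedding φ :=
      (MeasurableEquiv.addRight (fun _ : Fin (m+1) => c)).measurableEmbedding
    have hset : φ ⁻¹' B =
        {u : Fin (m+1) → ℝ | StrictMono u ∧ 0 < u 0 ∧ u (Fin.last m) < s} := by
      ext u
      simp only [Set.mem_preimage, hB, hφ, Set.mem_setOf_eq, Pi.add_apply]
      constructor
      · rintro ⟨h1, h2, h3⟩
        refine ⟨fun i j hij => ?_, by linarith, by linarith⟩
        have := h1 hij
        simpa using this
      · rintro ⟨h1, h2, h3⟩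
        refine ⟨fun i j hij => ?_, by linarith, by linarith⟩
        have := h1 hij
        simpa using this
    have key : (∫⁻ u in {u : Fin (m+1) → ℝ | StrictMono u ∧ 0 < u 0 ∧ u (Fin.last m) < s},
        (∏ j : Fin m, heatK μ (u j.succ - u j.castSucc)) * heatK μ (s - u (Fin.last m)))
        = ∫⁻ u in B, g u := by
      rw [← hset]
      rw [← hmp.setLIntegral_comp_preimage_emb hemb g B]
      apply lintegral_congr
      intro u
      have e1 : ∀ a b : ℝ, (a + c) - (b + c) = a - b := fun a b => by ring
      have e2 : t - (u (Fin.last m) + c) = s - u (Fin.last m) := by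
        simp [hc]; ring
      simp [hg, hφ, Pi.add_apply, e1, e2]
    rw [key]
    apply lintegral_mono_set
    intro u hu
    simp only [hB, Set.mem_setOf_eq] at hu ⊢
    exact ⟨hu.1, by linarith [hu.2.1], hu.2.2⟩
end
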